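/- Let N ≥ 1, let a, b, k be natural numbers, let ζ : ZMod N → ℂ be the character ζ(m) = exp(2πi·m̃/N), and work in Matrix (ZMod N) (ZMod N) ℂ. Let Z be the clock matrix (diagonal with Z j j = ζ(j)), X the shift matrix with entries X i j = 1 if i = j − 1 and 0 otherwise, and E_{s₁,s₂} the matrix unit (entry 1 at position (s₁,s₂), 0 elsewhere). Then for all s₁, s₂ ∈ ZMod N: (i) (Z^k)ᴴ * E_{s₁,s₂} * (Z^k)^a = ζ(−k·s₁ + k·a·s₂) • E_{s₁,s₂}; and (ii) Xᴴ * E_{s₁,s₂} * X^b = E_{s₁+1, s₂+b}. -/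

import Mathlib

open Matrix
/-- The character `ζ(m) = exp(2πi·m̃/N)` of `ZMod N`, computed from the canonical lift. -/
noncomputable def zeta (N : ℕ) (m : ZMod N) : ℂ :=
  Complex.exp (2 * Real.pi * Complex.I * (m.val : ℂ) / (N : ℂ))

/-- The clock matrix: diagonal with entries `ζ(j)`. -/
noncomputable def clockZ (N : ℕ) [NeZero N] : Matrix (ZMod N) (ZMod N) ℂ :=
  Matrix.diagonal fun j => zeta N j

/-- The shift matrix: `X i j = 1` if `i = j − 1` and `0` otherwise. -/
def shiftX (N : ℕ) [NeZero N] : Matrix (ZMod N) (ZMod N) ℂ :=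
  Matrix.of fun i j => if i = j - 1 then 1 else 0

lemma zeta_add (N : ℕ) [NeZero N] (x y : ZMod N) :
    zeta N (x + y) = zeta N x * zeta N y := by
  unfold zeta
  rw [← Complex.exp_add]
  have hN : (N : ℂ) ≠ 0 := Nat.cast_ne_zero.mpr (NeZero.ne N)
  set q : ℤ := (((x.val + y.val) / N : ℕ) : ℤ) with hq
  have hval : ((x + y).val : ℤ) = (x.val : ℤ) + y.val - N * q := by
    have h := Nat.mod_add_div (x.val + y.val) N
    have hZ : (((x.val + y.val) % N : ℕ) : ℤ) + N * q = x.val + y.val := by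
      rw [hq]; exact_mod_cast h
    rw [ZMod.val_add]
    omega
  have hvalC : ((x + y).val : ℂ) = (x.val : ℂ) + y.val - N * q := by
    exact_mod_cast congrArg (fun z : ℤ => (z : ℂ)) hval
  rw [hvalC]
  have : 2 * (Real.pi : ℂ) * Complex.I * ((x.val : ℂ) + y.val - N * q) / N =
      (2 * (Real.pi : ℂ) * Complex.I * x.val / N +
        2 * (Real.pi : ℂ) * Complex.I * y.val / N) + (-q : ℤ) * (2 * Real.pi * Complex.I) := by
    field_simp
    push_cast
    ring
  rw [this, Complex.exp_add, Complex.exp_int_mul_two_pi_mul_I, mul_one]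

lemma zeta_zero (N : ℕ) [NeZero N] : zeta N 0 = 1 := by
  simp [zeta]

lemma zeta_nsmul (N : ℕ) [NeZero N] (n : ℕ) (x : ZMod N) :
    zeta N x ^ n = zeta N (n * x) := by
  induction n with
  | zero => simp [zeta_zero]
  | succ n ih =>
    rw [pow_succ, ih]
    push_cast
    rw [add_mul, one_mul, zeta_add]

lemma zeta_star (N : ℕ) [NeZero N] (x : ZMod N) :
    star (zeta N x) = zeta N (-x) := by
  have h1 : zeta N x * zeta N (-x) = 1 := by
    rw [← zeta_add]; simp [zeta_zero]
  have h2 : star (zeta N x) * zeta N x = 1 := by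
    unfold zeta
    rw [show (star (Complex.exp (2 * (Real.pi:ℂ) * Complex.I * (x.val : ℂ) / N))) =
      Complex.exp ((starRingEnd ℂ) (2 * (Real.pi:ℂ) * Complex.I * (x.val : ℂ) / N)) from
      (Complex.exp_conj _).symm, ← Complex.exp_add]
    have : (starRingEnd ℂ) (2 * (Real.pi : ℂ) * Complex.I * (x.val : ℂ) / N) =
        -(2 * (Real.pi : ℂ) * Complex.I * (x.val : ℂ) / N) := by
      simp only [map_div₀, _root_.map_mul, Complex.conj_I, map_ofNat, map_natCast, Complex.conj_ofReal]
      ring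
    rw [this, neg_add_cancel, Complex.exp_zero]
  have hz : zeta N x ≠ 0 := by
    intro h; simp [h] at h2
  have := mul_right_cancel₀ hz (h2.trans (mul_comm (zeta N x) (zeta N (-x)) ▸ h1).symm)
  exact this

lemma shiftX_pow (N : ℕ) [NeZero N] (n : ℕ) :
    shiftX N ^ n = Matrix.of fun i j => if i = j - (n : ZMod N) then 1 else 0 := by
  induction n with
  | zero =>
    ext i j
    simp [Matrix.one_apply, eq_comm]
  | succ n ih =>
    ext i j
    rw [pow_succ, ih]
    simp only [Matrix.mul_apply, Matrix.of_apply, shiftX, ite_mul, mul_ite, one_mul, zero_mul,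
      mul_one, mul_zero]
    have key : j - 1 - (n : ZMod N) = j - ((n : ℕ) + 1 : ℕ) := by
      push_cast; ring
    rw [Finset.sum_eq_single (j - 1)]
    · simp [key]
    · intro x _ hx; simp [hx]
    · simp

/-- Generalized push-through relations for the exponential SPT MPS representative
`A^{s₁,s₂} = E_{s₁,s₂}` with bond unitaries `Z^k` (exponents 1 and a) and
`X` (exponents 1 and b). -/
theorem exponential_SPT_pushthrough (N : ℕ) [NeZero N] (a b k : ℕ)
    (s₁ s₂ : ZMod N) :
    ((clockZ N ^ k)ᴴ * Matrix.single s₁ s₂ (1 : ℂ) * (clockZ N ^ k) ^ a =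
      zeta N (-(k : ZMod N) * s₁ + (k : ZMod N) * (a : ZMod N) * s₂) •
        Matrix.single s₁ s₂ (1 : ℂ)) ∧
    ((shiftX N)ᴴ * Matrix.single s₁ s₂ (1 : ℂ) * (shiftX N) ^ b =
      Matrix.single (s₁ + 1) (s₂ + (b : ZMod N)) (1 : ℂ)) := by
  constructor
  · have hdiag : ∀ n : ℕ, clockZ N ^ n = Matrix.diagonal (fun j => zeta N j ^ n) := by
      intro n
      rw [clockZ, Matrix.diagonal_pow]
      congr 1
    rw [← pow_mul, hdiag, hdiag, Matrix.diagonal_conjTranspose]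
    ext i j
    rw [Matrix.mul_diagonal, Matrix.diagonal_mul, Matrix.smul_apply]
    by_cases h1 : s₁ = i
    · by_cases h2 : s₂ = j
      · subst h1; subst h2
        simp only [Matrix.single, Matrix.of_apply, and_self, if_true, Pi.star_apply,
          mul_one, smul_eq_mul]
        rw [zeta_nsmul, zeta_star, zeta_nsmul, zeta_add]
        push_cast
        ring_nf
      · simp [Matrix.single, h2]
    · simp [Matrix.single, h1]
  · rw [shiftX_pow]
    ext i j
    simp only [Matrix.mul_apply, Matrix.conjTranspose_apply, shiftX, Matrix.of_apply,
      Matrix.single, apply_ite star, star_one, star_zero, ite_mul, mul_ite, one_mul,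
      mul_one, zero_mul, mul_zero, ite_and, Finset.sum_ite_eq, Finset.sum_ite_eq',
      Finset.mem_univ, if_true]
    by_cases h1 : s₁ + 1 = i <;> by_cases h2 : s₂ + (b : ZMod N) = j <;>
      simp [h1, h2, eq_sub_iff_add_eq]
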